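/- Let d and t be positive integers and let G be a finite simple graph that contains K_t as a d-shallow minor. Then for every cubic graph H with vertex set {1, …, t}, G contains a (≤4d)-subdivision of H as a subgraph: there exist pairwise distinct vertices c_1, …, c_t of G and, for each edge {u, v} of H, a path P_{uv} in G from c_u to c_v with at most 4d+1 edges, such that any two distinct such paths share no vertices except possibly a common endpoint, and no internal vertex of any of these paths equals c_w for any w ∈ {1, …, t}. -/

import Mathlib

open SimpleGraph

/-- `G` contains `K_t` as a `d`-shallow minor: pairwise disjoint nonempty branch sets,
each inducing a connected subgraph of radius at most `d`, with an edge of `G` between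
any two branch sets. -/
def HasCliqueShallowMinor {V : Type*} (G : SimpleGraph V) (t d : ℕ) : Prop :=
  ∃ B : Fin t → Set V,
    (∀ i, (B i).Nonempty) ∧
    (Pairwise fun i j => Disjoint (B i) (B j)) ∧
    (∀ i, (G.induce (B i)).Connected) ∧
    (∀ i, ∃ x : ↥(B i), ∀ y : ↥(B i), (G.induce (B i)).dist x y ≤ d) ∧
    (∀ i j, i ≠ j → ∃ a ∈ B i, ∃ b ∈ B j, G.Adj a b)

section Helpers

variable {V : Type*} [DecidableEq V] {G : SimpleGraph V}

lemma myIsPath_append {a b c : V} {p : G.Walk a b} {q : G.Walk b c}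
    (hp : p.IsPath) (hq : q.IsPath)
    (hpq : ∀ x, x ∈ p.support → x ∈ q.support → x = b) :
    (p.append q).IsPath := by
  rw [Walk.isPath_def, Walk.support_append]
  rw [List.nodup_append]
  refine ⟨hp.support_nodup, ?_, ?_⟩
  · have := hq.support_nodup
    rw [q.support_eq_cons] at this
    exact (List.nodup_cons.mp this).2
  · intro x hx y hx' hxy; subst hxy
    have hxq : x ∈ q.support := List.mem_of_mem_tail hx'
    have hxb := hpq x hx hxq
    subst hxb
    have hnd := hq.support_nodup
    rw [q.support_eq_cons] at hnd hx'
    rw [List.tail_cons] at hx'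
    exact (List.nodup_cons.mp hnd).1 hx'

lemma myExists_prefix_to_set {a b : V} (S : Set V) (W : G.Walk a b) :
    b ∈ S → ∃ m ∈ S, ∃ W' : G.Walk a m, W'.length ≤ W.length ∧
      (∀ x ∈ W'.support, x ∈ W.support) ∧ (∀ x ∈ W'.support, x ∈ S → x = m) := by
  induction W with
  | nil =>
    intro hb
    exact ⟨_, hb, Walk.nil, le_rfl, fun x hx => hx, fun x hx _ => by simpa using hx⟩
  | @cons u v w huv p ih =>
    intro hb
    by_cases hu : u ∈ S
    · refine ⟨u, hu, Walk.nil, by simp, ?_, ?_⟩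
      · intro x hx; simp only [Walk.support_nil, List.mem_singleton] at hx; subst hx
        exact Walk.start_mem_support _
      · intro x hx _; simpa using hx
    · obtain ⟨m, hm, W', hlen, hsub, honly⟩ := ih hb
      refine ⟨m, hm, Walk.cons huv W', by simpa using Nat.succ_le_succ hlen, ?_, ?_⟩
      · intro x hx
        rw [Walk.support_cons, List.mem_cons] at hx ⊢
        rcases hx with rfl | hx
        · exact Or.inl rfl
        · exact Or.inr (hsub x hx)
      · intro x hx hxS
        rw [Walk.support_cons, List.mem_cons] at hx
        rcases hx with rfl | hx
        · exact absurd hxS hu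
        · exact honly x hx hxS

lemma myTripod (hconn : G.Connected) (d : ℕ) (x a1 a2 a3 : V)
    (h1 : G.dist x a1 ≤ d) (h2 : G.dist x a2 ≤ d) (h3 : G.dist x a3 ≤ d) :
    ∃ m : V, ∃ (p1 : G.Walk m a1) (p2 : G.Walk m a2) (p3 : G.Walk m a3),
      p1.IsPath ∧ p2.IsPath ∧ p3.IsPath ∧
      p1.length ≤ 2 * d ∧ p2.length ≤ 2 * d ∧ p3.length ≤ 2 * d ∧
      (∀ y, y ∈ p1.support → y ∈ p2.support → y = m) ∧
      (∀ y, y ∈ p1.support → y ∈ p3.support → y = m) ∧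
      (∀ y, y ∈ p2.support → y ∈ p3.support → y = m) := by
  obtain ⟨Q0, hQ0⟩ := hconn.exists_walk_length_eq_dist a1 a2
  have hQ0len : Q0.length ≤ 2 * d := by
    rw [hQ0]
    calc G.dist a1 a2 ≤ G.dist a1 x + G.dist x a2 := hconn.dist_triangle
      _ ≤ d + d := add_le_add (by rwa [SimpleGraph.dist_comm]) h2
      _ = 2 * d := by ring
  have hQpath : Q0.bypass.IsPath := Q0.bypass_isPath
  set Q := Q0.bypass with hQdef
  have hQlen : Q.length ≤ 2 * d := le_trans (Walk.length_bypass_le Q0) hQ0len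
  obtain ⟨W0, hW0⟩ := hconn.exists_walk_length_eq_dist a3 a1
  have hW0len : W0.length ≤ 2 * d := by
    rw [hW0]
    calc G.dist a3 a1 ≤ G.dist a3 x + G.dist x a1 := hconn.dist_triangle
      _ ≤ d + d := add_le_add (by rwa [SimpleGraph.dist_comm]) h1
      _ = 2 * d := by ring
  have ha1Q : a1 ∈ Q.support := Walk.start_mem_support Q
  obtain ⟨m, hmQ, R, hRlen, hRsub, hRonly⟩ :=
    myExists_prefix_to_set {y | y ∈ Q.support} W0 ha1Q
  have hmQ' : m ∈ Q.support := hmQ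
  refine ⟨m, (Q.takeUntil m hmQ').reverse, Q.dropUntil m hmQ', R.bypass.reverse,
    (hQpath.takeUntil hmQ').reverse, hQpath.dropUntil hmQ', R.bypass_isPath.reverse,
    ?_, ?_, ?_, ?_, ?_, ?_⟩
  · rw [Walk.length_reverse]; exact le_trans (Walk.length_takeUntil_le Q hmQ') hQlen
  · exact le_trans (Walk.length_dropUntil_le Q hmQ') hQlen
  · rw [Walk.length_reverse]
    exact le_trans (Walk.length_bypass_le R) (le_trans hRlen hW0len)
  · -- take vs drop
    intro y hy1 hy2
    rw [Walk.support_reverse, List.mem_reverse] at hy1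
    have hnodup : Q.support.Nodup := hQpath.support_nodup
    rw [← Q.take_spec hmQ', Walk.support_append, List.nodup_append] at hnodup
    rw [(Q.dropUntil m hmQ').support_eq_cons, List.mem_cons] at hy2
    rcases hy2 with rfl | hy2
    · rfl
    · exact absurd rfl (hnodup.2.2 y hy1 y hy2)
  · intro y hy1 hy3
    rw [Walk.support_reverse, List.mem_reverse] at hy1 hy3
    have hyQ : y ∈ Q.support := Walk.support_takeUntil_subset Q hmQ' hy1
    exact hRonly y (Walk.support_bypass_subset R hy3) hyQ
  · intro y hy2 hy3
    rw [Walk.support_reverse, List.mem_reverse] at hy3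
    have hyQ : y ∈ Q.support := Walk.support_dropUntil_subset Q hmQ' hy2
    exact hRonly y (Walk.support_bypass_subset R hy3) hyQ

lemma myNode_tripod {Bu : Set V} (hconn : (G.induce Bu).Connected)
    (x : ↥Bu) (d : ℕ) (hx : ∀ y : ↥Bu, (G.induce Bu).dist x y ≤ d)
    (a1 a2 a3 : V) (h1 : a1 ∈ Bu) (h2 : a2 ∈ Bu) (h3 : a3 ∈ Bu) :
    ∃ cu, cu ∈ Bu ∧ ∃ (p1 : G.Walk cu a1) (p2 : G.Walk cu a2) (p3 : G.Walk cu a3),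
      p1.IsPath ∧ p2.IsPath ∧ p3.IsPath ∧
      p1.length ≤ 2 * d ∧ p2.length ≤ 2 * d ∧ p3.length ≤ 2 * d ∧
      (∀ y ∈ p1.support, y ∈ Bu) ∧ (∀ y ∈ p2.support, y ∈ Bu) ∧
      (∀ y ∈ p3.support, y ∈ Bu) ∧
      (∀ y, y ∈ p1.support → y ∈ p2.support → y = cu) ∧
      (∀ y, y ∈ p1.support → y ∈ p3.support → y = cu) ∧
      (∀ y, y ∈ p2.support → y ∈ p3.support → y = cu) := by
  obtain ⟨m, q1, q2, q3, hq1, hq2, hq3, hl1, hl2, hl3, h12, h13, h23⟩ :=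
    myTripod hconn d x ⟨a1, h1⟩ ⟨a2, h2⟩ ⟨a3, h3⟩ (hx _) (hx _) (hx _)
  let f : G.induce Bu →g G := (SimpleGraph.Embedding.induce Bu).toHom
  have hfinj : Function.Injective f := Subtype.val_injective
  have hsupp : ∀ {u v : ↥Bu} (q : (G.induce Bu).Walk u v) (y : V),
      y ∈ (q.map f).support ↔ ∃ z, z ∈ q.support ∧ (z : V) = y := by
    intro u v q y
    rw [Walk.support_map, List.mem_map]
    exact Iff.rfl
  refine ⟨(m : V), m.2, q1.map f, q2.map f, q3.map f,
    Walk.map_isPath_of_injective hfinj hq1,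
    Walk.map_isPath_of_injective hfinj hq2,
    Walk.map_isPath_of_injective hfinj hq3,
    (Walk.length_map ..).trans_le hl1, (Walk.length_map ..).trans_le hl2, (Walk.length_map ..).trans_le hl3, ?_, ?_, ?_, ?_, ?_, ?_⟩
  · intro y hy; obtain ⟨z, _, rfl⟩ := (hsupp q1 y).mp hy; exact z.2
  · intro y hy; obtain ⟨z, _, rfl⟩ := (hsupp q2 y).mp hy; exact z.2
  · intro y hy; obtain ⟨z, _, rfl⟩ := (hsupp q3 y).mp hy; exact z.2
  · intro y hy1 hy2
    obtain ⟨z, hz, rfl⟩ := (hsupp q1 y).mp hy1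
    obtain ⟨z', hz', hzz⟩ := (hsupp q2 _).mp hy2
    cases Subtype.val_injective hzz
    exact congrArg Subtype.val (h12 _ hz hz')
  · intro y hy1 hy2
    obtain ⟨z, hz, rfl⟩ := (hsupp q1 y).mp hy1
    obtain ⟨z', hz', hzz⟩ := (hsupp q3 _).mp hy2
    cases Subtype.val_injective hzz
    exact congrArg Subtype.val (h13 _ hz hz')
  · intro y hy1 hy2
    obtain ⟨z, hz, rfl⟩ := (hsupp q2 y).mp hy1
    obtain ⟨z', hz', hzz⟩ := (hsupp q3 _).mp hy2
    cases Subtype.val_injective hzz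
    exact congrArg Subtype.val (h23 _ hz hz')

end Helpers

theorem stmt9 {V : Type*} [Fintype V] (G : SimpleGraph V) (d t : ℕ)
    (hd : 0 < d) (ht : 0 < t) (hminor : HasCliqueShallowMinor G t d)
    (H : SimpleGraph (Fin t)) (hcubic : ∀ v, (H.neighborSet v).ncard = 3) :
    ∃ c : Fin t → V, Function.Injective c ∧
      ∃ P : ∀ ⦃u v : Fin t⦄, H.Adj u v → G.Walk (c u) (c v),
        (∀ u v (h : H.Adj u v), (P h).IsPath) ∧
        (∀ u v (h : H.Adj u v), (P h).length ≤ 4 * d + 1) ∧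
        (∀ u v (h : H.Adj u v) (w : Fin t), c w ∈ (P h).support → w = u ∨ w = v) ∧
        (∀ u v u' v' (h : H.Adj u v) (h' : H.Adj u' v'), s(u, v) ≠ s(u', v') →
          ∀ x : V, x ∈ (P h).support → x ∈ (P h').support →
            (x = c u ∨ x = c v) ∧ (x = c u' ∨ x = c v')) := by
  classical
  obtain ⟨B, hBne, hBdisj, hBconn, hBrad, hBedge⟩ := hminor
  have hmemu : ∀ {u w : Fin t} {y : V}, y ∈ B u → y ∈ B w → u = w := by
    intro u w y hyu hyw
    by_contra hne
    exact Set.disjoint_left.mp (hBdisj hne) hyu hyw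
  have hEdge : ∀ u v : Fin t, u ≠ v → ∃ p : V × V, p.1 ∈ B u ∧ p.2 ∈ B v ∧ G.Adj p.1 p.2 := by
    intro u v h
    obtain ⟨a, ha, b, hb, hab⟩ := hBedge u v h
    exact ⟨(a, b), ha, hb, hab⟩
  choose e he1 he2 he3 using hEdge
  choose x hx using hBrad
  have hAex : ∃ A : Fin t → Fin t → V,
      ∀ u v : Fin t, u ≠ v → A u v ∈ B u ∧ G.Adj (A u v) (A v u) := by
    refine ⟨fun u v =>
      if h : u < v then (e u v h.ne).1
      else if h' : v < u then (e v u h'.ne).2 else ↑(x u), ?_⟩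
    intro u v h
    rcases lt_or_gt_of_ne h with hlt | hgt
    · simp only [dif_pos hlt, dif_neg (lt_asymm hlt)]
      exact ⟨he1 u v hlt.ne, he3 u v hlt.ne⟩
    · simp only [dif_pos hgt, dif_neg (lt_asymm hgt)]
      exact ⟨he2 v u hgt.ne, (he3 v u hgt.ne).symm⟩
  obtain ⟨A, hA⟩ := hAex
  have hNtriple := fun u => Set.ncard_eq_three.mp (hcubic u)
  choose n1 n2 n3 hn12 hn13 hn23 hNset using hNtriple
  have hadj1 : ∀ u, H.Adj u (n1 u) := by
    intro u
    have : n1 u ∈ H.neighborSet u := by rw [hNset u]; simp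
    exact this
  have hadj2 : ∀ u, H.Adj u (n2 u) := by
    intro u
    have : n2 u ∈ H.neighborSet u := by rw [hNset u]; simp
    exact this
  have hadj3 : ∀ u, H.Adj u (n3 u) := by
    intro u
    have : n3 u ∈ H.neighborSet u := by rw [hNset u]; simp
    exact this
  have hnode : ∀ u : Fin t, ∃ cu, cu ∈ B u ∧
      ∃ (p1 : G.Walk cu (A u (n1 u))) (p2 : G.Walk cu (A u (n2 u)))
        (p3 : G.Walk cu (A u (n3 u))),
      p1.IsPath ∧ p2.IsPath ∧ p3.IsPath ∧
      p1.length ≤ 2 * d ∧ p2.length ≤ 2 * d ∧ p3.length ≤ 2 * d ∧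
      (∀ y ∈ p1.support, y ∈ B u) ∧ (∀ y ∈ p2.support, y ∈ B u) ∧
      (∀ y ∈ p3.support, y ∈ B u) ∧
      (∀ y, y ∈ p1.support → y ∈ p2.support → y = cu) ∧
      (∀ y, y ∈ p1.support → y ∈ p3.support → y = cu) ∧
      (∀ y, y ∈ p2.support → y ∈ p3.support → y = cu) :=
    fun u => myNode_tripod (hBconn u) (x u) d (hx u) _ _ _
      (hA u (n1 u) (hadj1 u).ne).1 (hA u (n2 u) (hadj2 u).ne).1
      (hA u (n3 u) (hadj3 u).ne).1
  choose c hcB p1 p2 p3 hP1 hP2 hP3 hl1 hl2 hl3 hs1 hs2 hs3 h12 h13 h23 using hnode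
  have hcinj : Function.Injective c := fun u v h => hmemu (hcB u) (h ▸ hcB v)
  have hmem3 : ∀ u v, H.Adj u v → v = n1 u ∨ v = n2 u ∨ v = n3 u := by
    intro u v h
    have hv : v ∈ H.neighborSet u := h
    rw [hNset u] at hv
    simpa using hv
  have hleg : ∀ u : Fin t, ∃ L : ∀ v : Fin t, H.Adj u v → G.Walk (c u) (A u v),
      (∀ v (h : H.Adj u v), (L v h).IsPath) ∧
      (∀ v (h : H.Adj u v), (L v h).length ≤ 2 * d) ∧
      (∀ v (h : H.Adj u v), ∀ y ∈ (L v h).support, y ∈ B u) ∧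
      (∀ v v' (h : H.Adj u v) (h' : H.Adj u v'), v ≠ v' →
        ∀ y, y ∈ (L v h).support → y ∈ (L v' h').support → y = c u) := by
    intro u
    refine ⟨fun v h =>
      if e1 : v = n1 u then (p1 u).copy rfl (by rw [e1])
      else if e2 : v = n2 u then (p2 u).copy rfl (by rw [e2])
      else (p3 u).copy rfl
        (by rw [((hmem3 u v h).resolve_left e1).resolve_left e2]), ?_, ?_, ?_, ?_⟩
    · intro v h
      by_cases e1 : v = n1 u
      · simp only [dif_pos e1, Walk.isPath_copy]; exact hP1 u
      · by_cases e2 : v = n2 u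
        · simp only [dif_neg e1, dif_pos e2, Walk.isPath_copy]; exact hP2 u
        · simp only [dif_neg e1, dif_neg e2, Walk.isPath_copy]; exact hP3 u
    · intro v h
      by_cases e1 : v = n1 u
      · simp only [dif_pos e1, Walk.length_copy]; exact hl1 u
      · by_cases e2 : v = n2 u
        · simp only [dif_neg e1, dif_pos e2, Walk.length_copy]; exact hl2 u
        · simp only [dif_neg e1, dif_neg e2, Walk.length_copy]; exact hl3 u
    · intro v h
      by_cases e1 : v = n1 u
      · simp only [dif_pos e1, Walk.support_copy]; exact hs1 u
      · by_cases e2 : v = n2 u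
        · simp only [dif_neg e1, dif_pos e2, Walk.support_copy]; exact hs2 u
        · simp only [dif_neg e1, dif_neg e2, Walk.support_copy]; exact hs3 u
    · intro v v' h h' hne y hy hy'
      by_cases e1 : v = n1 u
      · simp only [dif_pos e1, Walk.support_copy] at hy
        by_cases f1 : v' = n1 u
        · exact absurd (e1.trans f1.symm) hne
        · by_cases f2 : v' = n2 u
          · simp only [dif_neg f1, dif_pos f2, Walk.support_copy] at hy'
            exact h12 u y hy hy'
          · simp only [dif_neg f1, dif_neg f2, Walk.support_copy] at hy'
            exact h13 u y hy hy'
      · by_cases e2 : v = n2 u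
        · simp only [dif_neg e1, dif_pos e2, Walk.support_copy] at hy
          by_cases f1 : v' = n1 u
          · simp only [dif_pos f1, Walk.support_copy] at hy'
            exact h12 u y hy' hy
          · by_cases f2 : v' = n2 u
            · exact absurd (e2.trans f2.symm) hne
            · simp only [dif_neg f1, dif_neg f2, Walk.support_copy] at hy'
              exact h23 u y hy hy'
        · simp only [dif_neg e1, dif_neg e2, Walk.support_copy] at hy
          by_cases f1 : v' = n1 u
          · simp only [dif_pos f1, Walk.support_copy] at hy'
            exact h13 u y hy' hy
          · by_cases f2 : v' = n2 u
            · simp only [dif_neg f1, dif_pos f2, Walk.support_copy] at hy'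
              exact h23 u y hy' hy
            · exact absurd
                ((((hmem3 u v h).resolve_left e1).resolve_left e2).trans
                  ((((hmem3 u v' h').resolve_left f1).resolve_left f2).symm)) hne
  choose Lg hLpath hLlen hLsub hLcross using hleg
  have hPsupp : ∀ u v (h : H.Adj u v) (y : V),
      y ∈ ((Lg u v h).append
        (Walk.cons ((hA u v h.ne).2) (Lg v u h.symm).reverse)).support →
      y ∈ (Lg u v h).support ∨ y ∈ (Lg v u h.symm).support := by
    intro u v h y hy
    rw [Walk.mem_support_append_iff] at hy
    rcases hy with hy | hy
    · exact Or.inl hy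
    · rw [Walk.support_cons, List.mem_cons] at hy
      rcases hy with rfl | hy
      · exact Or.inl (Walk.end_mem_support _)
      · rw [Walk.support_reverse, List.mem_reverse] at hy
        exact Or.inr hy
  have hmain : ∀ w z w' z' (hwz : H.Adj w z) (hwz' : H.Adj w' z'),
      s(w, z) ≠ s(w', z') →
      ∀ y, y ∈ (Lg w z hwz).support → y ∈ (Lg w' z' hwz').support → y = c w := by
    intro w z w' z' hwz hwz' hne y hy hy'
    have hww' : w = w' := hmemu (hLsub w z hwz y hy) (hLsub w' z' hwz' y hy')
    subst hww'
    have hzz' : z ≠ z' := by rintro rfl; exact hne rfl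
    exact hLcross w z z' hwz hwz' hzz' y hy hy'
  refine ⟨c, hcinj, fun u v h =>
    (Lg u v h).append (Walk.cons ((hA u v h.ne).2) (Lg v u h.symm).reverse),
    ?_, ?_, ?_, ?_⟩
  · intro u v h
    have hrev : ((Lg v u h.symm).reverse).IsPath := (hLpath v u h.symm).reverse
    have hnotin : A u v ∉ (Lg v u h.symm).reverse.support := by
      intro hmem
      rw [Walk.support_reverse, List.mem_reverse] at hmem
      exact h.ne (hmemu (hA u v h.ne).1 (hLsub v u h.symm _ hmem))
    refine myIsPath_append (hLpath u v h) (hrev.cons hnotin) ?_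
    intro z hz1 hz2
    rw [Walk.support_cons, List.mem_cons] at hz2
    rcases hz2 with rfl | hz2
    · rfl
    · rw [Walk.support_reverse, List.mem_reverse] at hz2
      exact absurd (hmemu (hLsub u v h z hz1) (hLsub v u h.symm z hz2)) h.ne
  · intro u v h
    rw [Walk.length_append, Walk.length_cons, Walk.length_reverse]
    have t1 := hLlen u v h
    have t2 := hLlen v u h.symm
    omega
  · intro u v h w hw
    rcases hPsupp u v h (c w) hw with hy | hy
    · exact Or.inl (hmemu (hcB w) (hLsub u v h _ hy))
    · exact Or.inr (hmemu (hcB w) (hLsub v u h.symm _ hy))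
  · intro u v u' v' h h' hne y hy hy'
    rcases hPsupp u v h y hy with h1 | h1 <;> rcases hPsupp u' v' h' y hy' with h2 | h2
    · exact ⟨Or.inl (hmain u v u' v' h h' hne y h1 h2),
        Or.inl (hmain u' v' u v h' h hne.symm y h2 h1)⟩
    · exact ⟨Or.inl (hmain u v v' u' h h'.symm
          (fun e => hne (e.trans Sym2.eq_swap)) y h1 h2),
        Or.inr (hmain v' u' u v h'.symm h
          (fun e => hne (e.symm.trans Sym2.eq_swap)) y h2 h1)⟩
    · exact ⟨Or.inr (hmain v u u' v' h.symm h'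
          (fun e => hne ((Sym2.eq_swap).trans e)) y h1 h2),
        Or.inl (hmain u' v' v u h' h.symm
          (fun e => hne ((e.trans Sym2.eq_swap).symm)) y h2 h1)⟩
    · exact ⟨Or.inr (hmain v u v' u' h.symm h'.symm
          (fun e => hne ((Sym2.eq_swap).trans (e.trans Sym2.eq_swap))) y h1 h2),
        Or.inr (hmain v' u' v u h'.symm h.symm
          (fun e => hne ((Sym2.eq_swap).trans (e.trans Sym2.eq_swap)).symm) y h2 h1)⟩
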